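/- Let G be a connected weighted graph and let p and q be positive integers. If G admits no (q,p)-good edge separation, then G is (pq,p)-unbreakable. -/

import Mathlib

open scoped Classical

/-- The total weight of the edges of `G` with one endpoint in `A` and the other in `B`. -/
noncomputable def cutWeight {V : Type*} [Fintype V] (G : SimpleGraph V) (w : Sym2 V → ℕ)
    (A B : Set V) : ℕ :=
  ∑ a : V, ∑ b : V, if a ∈ A ∧ b ∈ B ∧ G.Adj a b then w s(a, b) else 0

/-- `(A, Aᶜ)` is a `(q,p)`-good edge separation of the weighted graph `(G,w)`. -/
def GoodSep {V : Type*} [Fintype V] (G : SimpleGraph V) (w : Sym2 V → ℕ)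
    (q p : ℕ) (A : Finset V) : Prop :=
  q < A.card ∧ q < Aᶜ.card ∧ cutWeight G w ↑A ↑(Aᶜ : Finset V) ≤ p ∧
    (G.induce (↑A : Set V)).Connected ∧ (G.induce (↑(Aᶜ : Finset V) : Set V)).Connected

section StmtAux

set_option linter.unusedSectionVars false

variable {V : Type*} [Fintype V] (G : SimpleGraph V)

/-- The connected component of `v` inside the induced graph on `S`, as a set of vertices. -/
def stmtComp (S : Set V) (v : V) : Set V :=
  {u | ∃ (hv : v ∈ S) (hu : u ∈ S), (G.induce S).Reachable ⟨v, hv⟩ ⟨u, hu⟩}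

variable {G}

lemma stmtComp_subset {S : Set V} {v : V} : stmtComp G S v ⊆ S := by
  rintro u ⟨hv, hu, -⟩; exact hu

lemma mem_stmtComp_self {S : Set V} {v : V} (hv : v ∈ S) : v ∈ stmtComp G S v :=
  ⟨hv, hv, .refl _⟩

lemma adj_mem_stmtComp {S : Set V} {v u x : V} (hu : u ∈ stmtComp G S v) (hx : x ∈ S)
    (hadj : G.Adj u x) : x ∈ stmtComp G S v := by
  obtain ⟨hv, huS, h⟩ := hu
  refine ⟨hv, hx, h.trans (SimpleGraph.Adj.reachable ?_)⟩
  simpa using hadj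

lemma stmtComp_eq_of_mem {S : Set V} {v u : V} (h : u ∈ stmtComp G S v) :
    stmtComp G S u = stmtComp G S v := by
  obtain ⟨hv, hu, hr⟩ := h
  ext x
  constructor
  · rintro ⟨h1, hx, hr'⟩; exact ⟨hv, hx, hr.trans hr'⟩
  · rintro ⟨h1, hx, hr'⟩; exact ⟨hu, hx, hr.symm.trans hr'⟩

lemma stmtComp_connected {S : Set V} {v : V} (hv : v ∈ S) :
    (G.induce (stmtComp G S v)).Connected := by
  apply G.induce_connected_of_patches v (mem_stmtComp_self hv)
  rintro u ⟨h0, huS, hr⟩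
  obtain ⟨p⟩ := hr
  let q : G.Walk v u := p.map (SimpleGraph.Embedding.induce S).toHom
  refine ⟨{x | x ∈ q.support}, ?_, q.start_mem_support, q.end_mem_support, ?_⟩
  · intro x hx
    change x ∈ (p.map (SimpleGraph.Embedding.induce S).toHom).support at hx
    simp only [Set.mem_setOf_eq, q, SimpleGraph.Walk.support_map, List.mem_map] at hx
    obtain ⟨⟨x', hx'⟩, hy, rfl⟩ := hx
    exact ⟨hv, hx', ⟨p.takeUntil _ hy⟩⟩
  · exact q.connected_induce_support.preconnected ⟨v, q.start_mem_support⟩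
      ⟨u, q.end_mem_support⟩

variable (G) in
/-- Finset version of `stmtComp`. -/
noncomputable def stmtCompF (S : Finset V) (v : V) : Finset V :=
  S.filter (fun x => x ∈ stmtComp G ↑S v)

lemma coe_stmtCompF (S : Finset V) (v : V) : ↑(stmtCompF G S v) = stmtComp G ↑S v := by
  ext x
  simp only [stmtCompF, Finset.coe_filter, Set.mem_setOf_eq, Finset.mem_coe]
  exact ⟨fun h => h.2, fun h => ⟨stmtComp_subset h, h⟩⟩

lemma mem_stmtCompF {S : Finset V} {v x : V} :
    x ∈ stmtCompF G S v ↔ x ∈ stmtComp G ↑S v := by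
  rw [← Finset.mem_coe, coe_stmtCompF]

lemma stmtCompF_subset {S : Finset V} {v : V} : stmtCompF G S v ⊆ S :=
  Finset.filter_subset _ _

lemma stmtCompF_eq_of_mem {S : Finset V} {v u : V} (h : u ∈ stmtCompF G S v) :
    stmtCompF G S u = stmtCompF G S v := by
  apply Finset.coe_injective
  rw [coe_stmtCompF, coe_stmtCompF]
  exact stmtComp_eq_of_mem (mem_stmtCompF.mp h)

lemma mem_stmtCompF_self {S : Finset V} {v : V} (hv : v ∈ S) : v ∈ stmtCompF G S v :=
  mem_stmtCompF.mpr (mem_stmtComp_self hv)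

/-- A boundary edge out of the component of `v` in `S`, given a vertex outside `S`. -/
lemma stmt_exists_cross (hG : G.Connected) {S : Set V} {v t : V} (hv : v ∈ S) (ht : t ∉ S) :
    ∃ x y, x ∈ stmtComp G S v ∧ y ∉ S ∧ G.Adj x y := by
  obtain ⟨p⟩ := hG.preconnected v t
  obtain ⟨d, -, hdf, hds⟩ := p.exists_boundary_dart (stmtComp G S v) (mem_stmtComp_self hv)
    (fun h => ht (stmtComp_subset h))
  exact ⟨d.fst, d.snd, hdf, fun hyS => hds (adj_mem_stmtComp hdf hyS d.adj), d.adj⟩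

/-- The counting lemma: if every component of `S` meets a boundary edge in `X` and has at
most `q` vertices, then `S` has at most `|X| * q` vertices. -/
lemma stmt_count (S : Finset V) (X : Finset (Sym2 V)) (q : ℕ)
    (hcomp : ∀ v ∈ S, ∃ e ∈ X, ∃ x y, e = s(x, y) ∧ x ∈ stmtCompF G S v ∧ y ∉ S)
    (hsize : ∀ v ∈ S, (stmtCompF G S v).card ≤ q) :
    S.card ≤ X.card * q := by
  rcases S.eq_empty_or_nonempty with rfl | ⟨v₀, hv₀⟩
  · simp
  set CS : Finset (Finset V) := S.image (stmtCompF G S) with hCS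
  have hmemK : ∀ K ∈ CS, ∃ e, e ∈ X ∧ ∃ x y, e = s(x, y) ∧ x ∈ K ∧ y ∉ S := by
    intro K hK
    obtain ⟨v, hv, rfl⟩ := Finset.mem_image.mp hK
    obtain ⟨e, he, h⟩ := hcomp v hv
    exact ⟨e, he, h⟩
  have h1 : S.card ≤ ∑ K ∈ CS, K.card := by
    calc S.card ≤ (CS.biUnion id).card := by
          apply Finset.card_le_card
          intro v hv
          exact Finset.mem_biUnion.mpr ⟨stmtCompF G S v, Finset.mem_image_of_mem _ hv,
            mem_stmtCompF_self hv⟩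
      _ ≤ ∑ K ∈ CS, (id K).card := Finset.card_biUnion_le
  have h2 : ∑ K ∈ CS, K.card ≤ CS.card * q := by
    rw [← smul_eq_mul]
    apply Finset.sum_le_card_nsmul
    intro K hK
    obtain ⟨v, hv, rfl⟩ := Finset.mem_image.mp hK
    exact hsize v hv
  have h3 : CS.card ≤ X.card := by
    apply Finset.card_le_card_of_surjOn (fun e : Sym2 V =>
      if h : ∃ x, (∃ y, e = s(x, y) ∧ y ∉ S) ∧ x ∈ S then stmtCompF G S h.choose else ∅)
    intro K hK
    obtain ⟨vK, hvK, rfl⟩ := Finset.mem_image.mp (Finset.mem_coe.mp hK)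
    obtain ⟨e, he, x, y, hexy, hxK, hyS⟩ := hmemK _ (Finset.mem_coe.mp hK)
    have hprop : ∃ x, (∃ y, e = s(x, y) ∧ y ∉ S) ∧ x ∈ S :=
      ⟨x, ⟨y, hexy, hyS⟩, stmtCompF_subset hxK⟩
    refine ⟨e, Finset.mem_coe.mpr he, ?_⟩
    dsimp only
    rw [dif_pos hprop]
    obtain ⟨⟨y', hexy', hyS'⟩, hxS'⟩ := hprop.choose_spec
    -- the chosen vertex equals x, since both are the endpoint of e lying in S
    have : hprop.choose = x := by
      have hss : s(hprop.choose, y') = s(x, y) := hexy'.symm.trans hexy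
      rcases Sym2.eq_iff.mp hss with ⟨h1, -⟩ | ⟨h1, h2⟩
      · exact h1
      · exact absurd (h1 ▸ hxS') hyS
    rw [this]
    exact stmtCompF_eq_of_mem hxK
  calc S.card ≤ ∑ K ∈ CS, K.card := h1
    _ ≤ CS.card * q := h2
    _ ≤ X.card * q := Nat.mul_le_mul_right q h3

/-- `cutWeight` as a sum over a finset of ordered pairs. -/
lemma stmt_cutWeight_eq (G : SimpleGraph V) (w : Sym2 V → ℕ) (A B : Set V) :
    cutWeight G w A B = ∑ ab ∈ (Finset.univ ×ˢ Finset.univ).filter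
      (fun ab : V × V => ab.1 ∈ A ∧ ab.2 ∈ B ∧ G.Adj ab.1 ab.2), w s(ab.1, ab.2) := by
  rw [cutWeight, ← Finset.sum_product', Finset.sum_filter]

/-- The number of crossing edges is at most the cut weight. -/
lemma stmt_card_cross_le (G : SimpleGraph V) (w : Sym2 V → ℕ)
    (hw : ∀ e ∈ G.edgeSet, 0 < w e) (A : Finset V) :
    (G.edgeFinset.filter (fun e => ∃ x y, e = s(x, y) ∧ x ∈ A ∧ y ∉ A)).card ≤
      cutWeight G w ↑A ↑(Aᶜ : Finset V) := by
  set X := G.edgeFinset.filter (fun e => ∃ x y, e = s(x, y) ∧ x ∈ A ∧ y ∉ A) with hX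
  set P := (Finset.univ ×ˢ Finset.univ).filter
    (fun ab : V × V => ab.1 ∈ (↑A : Set V) ∧ ab.2 ∈ (↑(Aᶜ : Finset V) : Set V) ∧
      G.Adj ab.1 ab.2) with hP
  have hXP : X.card ≤ P.card := by
    apply Finset.card_le_card_of_surjOn (fun ab : V × V => s(ab.1, ab.2))
    intro e he
    rw [Finset.mem_coe, hX, Finset.mem_filter] at he
    obtain ⟨heE, x, y, hexy, hxA, hyA⟩ := he
    refine ⟨(x, y), ?_, hexy.symm⟩
    rw [Finset.mem_coe, hP, Finset.mem_filter]
    refine ⟨Finset.mem_product.mpr ⟨Finset.mem_univ _, Finset.mem_univ _⟩, ?_, ?_, ?_⟩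
    · simpa using hxA
    · simp [hyA]
    · rw [← SimpleGraph.mem_edgeSet, ← hexy]
      exact SimpleGraph.mem_edgeFinset.mp heE
  have hPW : P.card ≤ ∑ ab ∈ P, w s(ab.1, ab.2) := by
    have := Finset.card_nsmul_le_sum P (fun ab => w s(ab.1, ab.2)) 1 ?_
    · simpa using this
    · intro ab hab
      rw [hP, Finset.mem_filter] at hab
      exact hw _ ((G.mem_edgeSet).mpr hab.2.2.2)
  have hPeq : cutWeight G w ↑A ↑(Aᶜ : Finset V) = ∑ ab ∈ P, w s(ab.1, ab.2) := by
    rw [stmt_cutWeight_eq]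
    apply Finset.sum_congr _ (fun _ _ => rfl)
    ext ab
    rw [hP]
    simp only [Finset.mem_filter]
  rw [hPeq]
  exact le_trans hXP hPW

end StmtAux

/-- If a connected weighted graph `G` (with positive edge weights) admits no `(q,p)`-good
edge separation, then `G` is `(pq,p)`-unbreakable: every partition `(A, Aᶜ)` of `V(G)`
with `w(A, Aᶜ) ≤ p` has a side with at most `pq` vertices. -/
theorem stmt_3 {V : Type*} [Fintype V] (G : SimpleGraph V) (w : Sym2 V → ℕ)
    (hw : ∀ e ∈ G.edgeSet, 0 < w e) (hG : G.Connected)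
    (p q : ℕ) (hp : 0 < p) (hq : 0 < q)
    (hno : ¬ ∃ A : Finset V, GoodSep G w q p A) :
    ∀ A : Finset V, cutWeight G w ↑A ↑(Aᶜ : Finset V) ≤ p →
      A.card ≤ p * q ∨ Aᶜ.card ≤ p * q := by
  intro A hcut
  by_contra hcon
  push_neg at hcon
  obtain ⟨hA, hAc⟩ := hcon
  -- the crossing edges
  set X := G.edgeFinset.filter (fun e => ∃ x y, e = s(x, y) ∧ x ∈ A ∧ y ∉ A) with hX
  have hXp : X.card ≤ p := le_trans (stmt_card_cross_le G w hw A) hcut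
  -- both sides are nonempty
  have hApos : (0 : ℕ) < A.card := lt_of_le_of_lt (Nat.zero_le _) hA
  have hAcpos : (0 : ℕ) < Aᶜ.card := lt_of_le_of_lt (Nat.zero_le _) hAc
  obtain ⟨b₀, hb₀⟩ := Finset.card_pos.mp hAcpos
  have hb₀A : b₀ ∉ A := Finset.mem_compl.mp hb₀
  -- a big component C of G[A]
  have hbig : ∃ a₀ ∈ A, q < (stmtCompF G A a₀).card := by
    by_contra h
    push_neg at h
    have hcomp : ∀ v ∈ A, ∃ e ∈ X, ∃ x y, e = s(x, y) ∧ x ∈ stmtCompF G A v ∧ y ∉ A := by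
      intro v hv
      obtain ⟨x, y, hx, hy, hadj⟩ := stmt_exists_cross hG
        (show v ∈ (↑A : Set V) from hv) (show b₀ ∉ (↑A : Set V) from hb₀A)
      have hxA : x ∈ A := stmtComp_subset hx
      refine ⟨s(x, y), ?_, x, y, rfl, mem_stmtCompF.mpr hx, hy⟩
      rw [hX, Finset.mem_filter]
      exact ⟨SimpleGraph.mem_edgeFinset.mpr ((G.mem_edgeSet).mpr hadj), x, y, rfl, hxA, hy⟩
    have := stmt_count A X q hcomp h
    exact absurd (lt_of_lt_of_le hA (le_trans this (Nat.mul_le_mul_right q hXp)))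
      (lt_irrefl _)
  obtain ⟨a₀, ha₀, hCq⟩ := hbig
  set C := stmtCompF G A a₀ with hC
  have hCA : C ⊆ A := stmtCompF_subset
  have ha₀C : a₀ ∈ C := mem_stmtCompF_self ha₀
  have ha₀Cc : a₀ ∉ (↑(Cᶜ : Finset V) : Set V) := by
    simp only [Finset.coe_compl, Set.mem_compl_iff, Finset.mem_coe, not_not]
    exact ha₀C
  -- every component of G[Cᶜ] has a boundary edge into C, from a vertex outside A
  have key : ∀ v ∈ Cᶜ, ∃ x z, x ∈ stmtComp G ↑(Cᶜ : Finset V) v ∧ z ∈ C ∧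
      G.Adj x z ∧ x ∉ A := by
    intro v hv
    obtain ⟨x, z, hx, hz, hadj⟩ := stmt_exists_cross hG
      (show v ∈ (↑(Cᶜ : Finset V) : Set V) from hv) ha₀Cc
    have hxCc : x ∈ Cᶜ := stmtComp_subset hx
    have hzC : z ∈ C := by
      by_contra hzC
      exact hz (by simpa using hzC)
    have hxA : x ∉ A := by
      intro hxA
      have : x ∈ stmtComp G ↑A a₀ :=
        adj_mem_stmtComp (mem_stmtCompF.mp hzC) hxA hadj.symm
      exact (Finset.mem_compl.mp hxCc) (mem_stmtCompF.mpr this)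
    exact ⟨x, z, hx, hzC, hadj, hxA⟩
  -- a big component D of G[Cᶜ]
  have hbig2 : ∃ v ∈ Cᶜ, q < (stmtCompF G Cᶜ v).card := by
    by_contra h
    push_neg at h
    have hcomp : ∀ v ∈ Cᶜ, ∃ e ∈ X, ∃ x y, e = s(x, y) ∧ x ∈ stmtCompF G Cᶜ v ∧ y ∉ Cᶜ := by
      intro v hv
      obtain ⟨x, z, hx, hz, hadj, hxA⟩ := key v hv
      refine ⟨s(x, z), ?_, x, z, rfl, mem_stmtCompF.mpr hx, by simp [hz]⟩
      rw [hX, Finset.mem_filter]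
      exact ⟨SimpleGraph.mem_edgeFinset.mpr ((G.mem_edgeSet).mpr hadj),
        z, x, Sym2.eq_swap, hCA hz, hxA⟩
    have hcount := stmt_count Cᶜ X q hcomp h
    have hsub : Aᶜ ⊆ Cᶜ := Finset.compl_subset_compl.mpr hCA
    have : Aᶜ.card ≤ p * q :=
      le_trans (Finset.card_le_card hsub) (le_trans hcount (Nat.mul_le_mul_right q hXp))
    exact absurd (lt_of_lt_of_le hAc this) (lt_irrefl _)
  obtain ⟨v₁, hv₁, hDq⟩ := hbig2
  set D := stmtCompF G Cᶜ v₁ with hD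
  have hDCc : D ⊆ Cᶜ := stmtCompF_subset
  have hCDc : C ⊆ Dᶜ := by
    intro x hx
    exact Finset.mem_compl.mpr (fun hxD => (Finset.mem_compl.mp (hDCc hxD)) hx)
  -- (Dᶜ, D) is a good edge separation: contradiction
  apply hno
  refine ⟨Dᶜ, lt_of_lt_of_le hCq (Finset.card_le_card hCDc), ?_, ?_, ?_, ?_⟩
  · rwa [compl_compl]
  · -- cut weight bound
    rw [compl_compl]
    refine le_trans ?_ hcut
    rw [cutWeight, cutWeight]
    apply Finset.sum_le_sum
    intro a _
    apply Finset.sum_le_sum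
    intro b _
    split_ifs with h1 h2
    · exact le_refl _
    · exfalso
      obtain ⟨haDc, hbD, hadj⟩ := h1
      have haD : a ∉ D := by simpa using haDc
      have hbD' : b ∈ D := by simpa using hbD
      have hbCc : b ∈ Cᶜ := hDCc hbD'
      have haC : a ∈ C := by
        by_contra haC
        have haCc : a ∈ Cᶜ := Finset.mem_compl.mpr haC
        have : a ∈ stmtComp G ↑(Cᶜ : Finset V) v₁ :=
          adj_mem_stmtComp (mem_stmtCompF.mp hbD') haCc hadj.symm
        exact haD (mem_stmtCompF.mpr this)
      have hbA : b ∉ A := by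
        intro hbA
        have : b ∈ stmtComp G ↑A a₀ :=
          adj_mem_stmtComp (mem_stmtCompF.mp haC) hbA hadj
        exact (Finset.mem_compl.mp hbCc) (mem_stmtCompF.mpr this)
      exact h2 ⟨by simpa using hCA haC, by simpa using hbA, hadj⟩
    · exact Nat.zero_le _
    · exact Nat.zero_le _
  · -- G[Dᶜ] is connected
    have hCconn : (G.induce (↑C : Set V)).Connected := by
      rw [hC, coe_stmtCompF]
      exact stmtComp_connected ha₀
    apply G.induce_connected_of_patches a₀
      (show a₀ ∈ (↑(Dᶜ : Finset V) : Set V) from hCDc ha₀C)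
    intro u hu
    have huD : u ∉ D := by simpa using hu
    by_cases huC : u ∈ C
    · refine ⟨↑C, by exact_mod_cast hCDc, ha₀C, huC, ?_⟩
      exact hCconn.preconnected ⟨a₀, ha₀C⟩ ⟨u, huC⟩
    · have huCc : u ∈ Cᶜ := Finset.mem_compl.mpr huC
      obtain ⟨x, z, hx, hz, hadj, -⟩ := key u huCc
      set K := stmtCompF G Cᶜ u with hK
      have hxK : x ∈ K := mem_stmtCompF.mpr hx
      have huK : u ∈ K := mem_stmtCompF_self huCc
      have hKconn : (G.induce (↑K : Set V)).Connected := by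
        rw [hK, coe_stmtCompF]
        exact stmtComp_connected huCc
      have hKDc : K ⊆ Dᶜ := by
        intro t ht
        refine Finset.mem_compl.mpr (fun htD => ?_)
        have h1 : stmtCompF G Cᶜ t = K := hK ▸ stmtCompF_eq_of_mem ht
        have h2 : stmtCompF G Cᶜ t = D := hD ▸ stmtCompF_eq_of_mem htD
        exact huD (h2 ▸ h1.symm ▸ huK)
      refine ⟨↑C ∪ ↑K, ?_, Or.inl ha₀C, Or.inr huK, ?_⟩
      · rw [Set.union_subset_iff]
        constructor
        · exact_mod_cast hCDc
        · exact_mod_cast hKDc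
      · exact (SimpleGraph.connected_induce_union hCconn.preconnected hKconn.preconnected hz hxK
          hadj.symm).preconnected ⟨a₀, Or.inl ha₀C⟩ ⟨u, Or.inr huK⟩
  · -- G[Dᶜᶜ] = G[D] is connected
    rw [compl_compl, hD, coe_stmtCompF]
    exact stmtComp_connected hv₁
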